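/- Let (F, Ψ₊, Ψ₋) be a nearly Kähler SU(3)-structure on M⁶, i.e. dF = 3Ψ₊ and dΨ₋ = -2F∧F. Define on M⁶ × ℝ (coordinate q) the family F(q) = sin²q F, Ψ₊(q) = sin³q(sin q Ψ₊ + cos q Ψ₋), Ψ₋(q) = sin³q(-cos q Ψ₊ + sin q Ψ₋). Then: (a) each structure is nearly half flat, dΨ₋(q) = -2F(q)∧F(q); (b) the evolution equations ∂_q Ψ₋(q) = 4Ψ₊(q) - dF(q) and dΨ₊(q) = -½ ∂_q(F(q)∧F(q)) hold. -/

import Mathlib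

open Real

/-- Let `(F, Ψ₊, Ψ₋)` be a nearly Kähler SU(3)-structure on `M⁶`
(`dF = 3Ψ₊`, `dΨ₋ = -2F∧F`).  Then the family
`F(q) = sin²q F`, `Ψ₊(q) = sin³q(sin q Ψ₊ + cos q Ψ₋)`, `Ψ₋(q) = sin³q(-cos q Ψ₊ + sin q Ψ₋)`
satisfies:
(a) each structure is nearly half flat, `dΨ₋(q) = -2F(q)∧F(q)`;
(b) the evolution equations `∂_q Ψ₋(q) = 4Ψ₊(q) - dF(q)` and
`dΨ₊(q) = -½ ∂_q(F(q)∧F(q))`.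

Forms live in the de Rham algebra `A` of `M⁶` (wedge written `*`); `d` acts only on `A`. -/
theorem nearlyKaehler_family_nearlyHalfFlat_evolution {A : Type*}
    [NormedRing A] [NormedAlgebra ℝ A]
    (d : A →ₗ[ℝ] A) (F Ψp Ψm : A)
    (hdd : ∀ x : A, d (d x) = 0)
    -- nearly Kähler equations
    (hNK₁ : d F = (3 : ℝ) • Ψp)
    (hNK₂ : d Ψm = (-2 : ℝ) • (F * F)) :
    -- (a) nearly half flat for every q
    (∀ q : ℝ, d (sin q ^ 3 • (-(cos q) • Ψp + sin q • Ψm))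
        = (-2 : ℝ) • ((sin q ^ 2 • F) * (sin q ^ 2 • F))) ∧
    -- (b) evolution nearly half flat equations
    (∀ q : ℝ, deriv (fun s : ℝ => sin s ^ 3 • (-(cos s) • Ψp + sin s • Ψm)) q
        = (4 : ℝ) • (sin q ^ 3 • (sin q • Ψp + cos q • Ψm)) - d (sin q ^ 2 • F)) ∧
    (∀ q : ℝ, d (sin q ^ 3 • (sin q • Ψp + cos q • Ψm))
        = (-(1 : ℝ) / 2) •
            deriv (fun s : ℝ => (sin s ^ 2 • F) * (sin s ^ 2 • F)) q) := by
  -- dΨ₊ = 0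
  have hΨp : d Ψp = 0 := by
    have h := hdd F
    rw [hNK₁, map_smul] at h
    have := smul_eq_zero.mp h
    rcases this with h3 | h0
    · norm_num at h3
    · exact h0
  -- rewrite the Ψ₋ family as scalar functions times constants
  have keym : (fun s : ℝ => sin s ^ 3 • (-(cos s) • Ψp + sin s • Ψm))
      = fun s : ℝ => (-(sin s ^ 3 * cos s)) • Ψp + (sin s ^ 4) • Ψm := by
    funext s
    match_scalars
    all_goals ring
  have keyF : (fun s : ℝ => (sin s ^ 2 • F) * (sin s ^ 2 • F))
      = fun s : ℝ => (sin s ^ 4) • (F * F) := by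
    funext s
    rw [smul_mul_smul_comm]
    ring_nf
  refine ⟨?_, ?_, ?_⟩
  · intro q
    rw [map_smul, map_add, map_smul, map_smul, hΨp, hNK₂, smul_mul_smul_comm]
    match_scalars <;> ring
  · intro q
    have h1 : HasDerivAt (fun s : ℝ => -(sin s ^ 3 * cos s))
        (-(3 * sin q ^ 2 * cos q * cos q + sin q ^ 3 * (-sin q))) q := by
      exact (((Real.hasDerivAt_sin q).pow 3).mul (Real.hasDerivAt_cos q)).neg
    have h2 : HasDerivAt (fun s : ℝ => sin s ^ 4) (4 * sin q ^ 3 * cos q) q := by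
      simpa using (Real.hasDerivAt_sin q).fun_pow 4
    have hD : HasDerivAt (fun s : ℝ => (-(sin s ^ 3 * cos s)) • Ψp + (sin s ^ 4) • Ψm)
        ((-(3 * sin q ^ 2 * cos q * cos q + sin q ^ 3 * (-sin q))) • Ψp
          + (4 * sin q ^ 3 * cos q) • Ψm) q :=
      (h1.smul_const Ψp).add (h2.smul_const Ψm)
    rw [keym, hD.deriv, map_smul, hNK₁]
    match_scalars
    any_goals ring
    linear_combination (-3 * sin q ^ 2) * (sin_sq_add_cos_sq q)
  · intro q
    have h2 : HasDerivAt (fun s : ℝ => sin s ^ 4) (4 * sin q ^ 3 * cos q) q := by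
      simpa using (Real.hasDerivAt_sin q).fun_pow 4
    have hD : HasDerivAt (fun s : ℝ => (sin s ^ 4) • (F * F))
        ((4 * sin q ^ 3 * cos q) • (F * F)) q := h2.smul_const (F * F)
    rw [keyF, hD.deriv, map_smul, map_add, map_smul, map_smul, hΨp, hNK₂]
    match_scalars
    all_goals ring
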